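/- Let g be a real Lie algebra and let p ⊆ d = g ⊕ g be a Lie subalgebra such that d = g^δ ∔ p as an internal direct sum of subspaces. Then: (i) for every X ∈ g there exists a unique pair (A₊, A₋) ∈ p such that X = (1/2)(A₊ − A₋); (ii) defining R_p X := (1/2)(A₊ + A₋), the resulting ℝ-linear operator R_p on g satisfies mCYBE(1): [R_p X, R_p Y] − R_p([R_p X, Y] + [X, R_p Y]) = −[X,Y] for all X,Y ∈ g. -/

import Mathlib

/-- The real double `d = g ⊕ g`: the product Lie ring with componentwise bracket. -/
instance prodLieRing (g : Type*) [LieRing g] : LieRing (g × g) where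
  bracket x y := (⁅x.1, y.1⁆, ⁅x.2, y.2⁆)
  add_lie x y z := Prod.ext (add_lie x.1 y.1 z.1) (add_lie x.2 y.2 z.2)
  lie_add x y z := Prod.ext (lie_add x.1 y.1 z.1) (lie_add x.2 y.2 z.2)
  lie_self x := Prod.ext (lie_self x.1) (lie_self x.2)
  leibniz_lie x y z := Prod.ext (leibniz_lie x.1 y.1 z.1) (leibniz_lie x.2 y.2 z.2)

/-- Let `p` be a Lie subalgebra of the real double `d = g ⊕ g`
complementary to the diagonal `g^δ`. Then (i) every `X ∈ g` is `(1/2)(A₊ − A₋)` for a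
unique `(A₊, A₋) ∈ p`, and (ii) the operator `R_p X := (1/2)(A₊ + A₋)` satisfies
mCYBE(1). -/
theorem stmt12 (g : Type*) [LieRing g] [LieAlgebra ℝ g]
    (p : Submodule ℝ (g × g))
    (hsub : ∀ x ∈ p, ∀ y ∈ p, ⁅x, y⁆ ∈ p)
    (hcompl : IsCompl
      (LinearMap.range ((LinearMap.id : g →ₗ[ℝ] g).prod (LinearMap.id : g →ₗ[ℝ] g))) p) :
    (∀ X : g, ∃! A : g × g, A ∈ p ∧ X = (1 / 2 : ℝ) • (A.1 - A.2)) ∧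
    (∀ Rp : g → g,
      (∀ (X : g) (A : g × g), A ∈ p → X = (1 / 2 : ℝ) • (A.1 - A.2) →
          Rp X = (1 / 2 : ℝ) • (A.1 + A.2)) →
      ∀ X Y : g,
        ⁅Rp X, Rp Y⁆ - Rp (⁅Rp X, Y⁆ + ⁅X, Rp Y⁆) = -⁅X, Y⁆) := by
  have huniq : ∀ X : g, ∃! A : g × g, A ∈ p ∧ X = (1 / 2 : ℝ) • (A.1 - A.2) := by
    intro X
    obtain ⟨y, z, hy, hz, hyz⟩ :=
      Submodule.codisjoint_iff_exists_add_eq.mp hcompl.codisjoint (X, -X)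
    obtain ⟨w, hw⟩ := hy
    refine ⟨z, ⟨hz, ?_⟩, ?_⟩
    · have h1 : w + z.1 = X := congrArg Prod.fst (hw ▸ hyz)
      have h2 : w + z.2 = -X := congrArg Prod.snd (hw ▸ hyz)
      have : z.1 - z.2 = (2 : ℝ) • X := by
        have : z.1 - z.2 = (w + z.1) - (w + z.2) := by abel
        rw [this, h1, h2, two_smul]; abel
      rw [this, smul_smul]; norm_num
    · rintro B ⟨hB, hBX⟩
      have hd : B.1 - z.1 = B.2 - z.2 := by
        have hz2 : z.1 - z.2 = (2 : ℝ) • X := by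
          have h1 : w + z.1 = X := congrArg Prod.fst (hw ▸ hyz)
          have h2 : w + z.2 = -X := congrArg Prod.snd (hw ▸ hyz)
          have : z.1 - z.2 = (w + z.1) - (w + z.2) := by abel
          rw [this, h1, h2, two_smul]; abel
        have hB2 : B.1 - B.2 = (2 : ℝ) • X := by
          have := congrArg (fun t => (2 : ℝ) • t) hBX
          simp only [smul_smul] at this
          norm_num at this
          rw [← this]
        have : B.1 - B.2 = z.1 - z.2 := by rw [hB2, hz2]
        have := sub_eq_sub_iff_sub_eq_sub.mp this
        exact this
      have hmem : B - z ∈ p := Submodule.sub_mem p hB hz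
      have hdiag : B - z ∈ LinearMap.range
          ((LinearMap.id : g →ₗ[ℝ] g).prod (LinearMap.id : g →ₗ[ℝ] g)) := by
        refine ⟨B.1 - z.1, ?_⟩
        ext
        · rfl
        · exact hd
      have : B - z = 0 := by
        exact (Submodule.disjoint_def.mp hcompl.disjoint) _ hdiag hmem
      have := sub_eq_zero.mp this
      exact this
  refine ⟨huniq, ?_⟩
  intro Rp hR X Y
  obtain ⟨A, ⟨hA, hAX⟩, -⟩ := huniq X
  obtain ⟨B, ⟨hB, hBY⟩, -⟩ := huniq Y
  have hRX := hR X A hA hAX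
  have hRY := hR Y B hB hBY
  have hA1 : A.1 = Rp X + X := by
    rw [hRX, hAX]; module
  have hA2 : A.2 = Rp X - X := by
    rw [hRX, hAX]; module
  have hB1 : B.1 = Rp Y + Y := by
    rw [hRY, hBY]; module
  have hB2 : B.2 = Rp Y - Y := by
    rw [hRY, hBY]; module
  have hAB : ⁅A, B⁆ ∈ p := hsub A hA B hB
  have hbr1 : (⁅A, B⁆ : g × g).1 = ⁅A.1, B.1⁆ := rfl
  have hbr2 : (⁅A, B⁆ : g × g).2 = ⁅A.2, B.2⁆ := rfl
  have hkey : ⁅Rp X, Y⁆ + ⁅X, Rp Y⁆ =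
      (1 / 2 : ℝ) • ((⁅A, B⁆ : g × g).1 - (⁅A, B⁆ : g × g).2) := by
    rw [hbr1, hbr2, hA1, hA2, hB1, hB2]
    simp only [add_lie, lie_add, sub_lie, lie_sub]
    module
  have hRZ := hR (⁅Rp X, Y⁆ + ⁅X, Rp Y⁆) ⁅A, B⁆ hAB hkey
  rw [hRZ, hbr1, hbr2, hA1, hA2, hB1, hB2]
  simp only [add_lie, lie_add, sub_lie, lie_sub]
  module
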